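/- Let a : Fin n → ℝ^d be an injective point configuration (a i ≠ a j for i ≠ j), let 1 ≤ k ≤ n−1, and let [X1,Y1], [X2,Y2] be tiles that cover level k (|X_j| < k < |Y_j|) and are NOT separated. Then there exist fine tiles [X'1,Y'1] and [X'2,Y'2] with X_j ⊆ X'_j ⊆ Y'_j ⊆ Y_j for j = 1,2, each covering level k (|X'_j| < k < |Y'_j|), such that [X'1,Y'1] and [X'2,Y'2] are NOT separated. -/

import Mathlib

/-- The tiles `[X1,Y1]` and `[X2,Y2]` are separated with respect to `a`:
there is an affine functional positive on `(X1 \ X2) ∪ (Y1 \ Y2)`, negative on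
`(X2 \ X1) ∪ (Y2 \ Y1)` and zero on `(Y1 ∩ Y2) \ (X1 ∪ X2)`. -/
def SeparatedTiles {n d : ℕ} (a : Fin n → (Fin d → ℝ))
    (X1 Y1 X2 Y2 : Finset (Fin n)) : Prop :=
  ∃ f : (Fin d → ℝ) →ᵃ[ℝ] ℝ,
    (∀ i ∈ (X1 \ X2) ∪ (Y1 \ Y2), 0 < f (a i)) ∧
    (∀ i ∈ (X2 \ X1) ∪ (Y2 \ Y1), f (a i) < 0) ∧
    (∀ i ∈ (Y1 ∩ Y2) \ (X1 ∪ X2), f (a i) = 0)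

/-- The tile `[X,Y]` is fine: the points indexed by `Y \ X` are affinely independent. -/
def FineTile {n d : ℕ} (a : Fin n → (Fin d → ℝ)) (X Y : Finset (Fin n)) : Prop :=
  AffineIndependent ℝ (fun i : {x // x ∈ Y \ X} => a i)

open Finset Pointwise

variable {n d : ℕ}

def Pset (X1 Y1 X2 Y2 : Finset (Fin n)) : Finset (Fin n) := (X1 \ X2) ∪ (Y1 \ Y2)
def Nset (X1 Y1 X2 Y2 : Finset (Fin n)) : Finset (Fin n) := (X2 \ X1) ∪ (Y2 \ Y1)
def Zset (X1 Y1 X2 Y2 : Finset (Fin n)) : Finset (Fin n) := (Y1 ∩ Y2) \ (X1 ∪ X2)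

def IsWitness (a : Fin n → Fin d → ℝ) (X1 Y1 X2 Y2 : Finset (Fin n)) (w : Fin n → ℝ) : Prop :=
  (∀ i ∈ Pset X1 Y1 X2 Y2, 0 ≤ w i) ∧
  (∀ i ∈ Nset X1 Y1 X2 Y2, w i ≤ 0) ∧
  (∀ i, i ∉ Pset X1 Y1 X2 Y2 ∪ Nset X1 Y1 X2 Y2 ∪ Zset X1 Y1 X2 Y2 → w i = 0) ∧
  (∃ i ∈ Pset X1 Y1 X2 Y2 ∪ Nset X1 Y1 X2 Y2, w i ≠ 0) ∧
  (∑ i, w i • a i) = 0 ∧ (∑ i, w i) = 0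

lemma not_sep_of_witness {a : Fin n → Fin d → ℝ} {X1 Y1 X2 Y2 : Finset (Fin n)} {w : Fin n → ℝ}
    (hw : IsWitness a X1 Y1 X2 Y2 w) : ¬ SeparatedTiles a X1 Y1 X2 Y2 := by
  rintro ⟨f, hfP, hfN, hfZ⟩
  obtain ⟨hP, hN, h0, ⟨i0, hi0mem, hi0⟩, hsum, hsum1⟩ := hw
  have hdec : ∀ i, f (a i) = f.linear (a i) + f 0 := by
    intro i
    conv_lhs => rw [show a i = a i +ᵥ (0 : Fin d → ℝ) by simp]
    rw [f.map_vadd]; rfl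
  have key : ∑ i, w i * f (a i) = 0 := by
    have : ∑ i, w i * f (a i)
        = f.linear (∑ i, w i • a i) + (∑ i, w i) * f 0 := by
      rw [map_sum, Finset.sum_mul, ← Finset.sum_add_distrib]
      refine Finset.sum_congr rfl fun i _ => ?_
      rw [hdec i, f.linear.map_smul, smul_eq_mul, mul_add]
    rw [this, hsum, hsum1, map_zero, zero_mul, add_zero]
  have hnonneg : ∀ i : Fin n, 0 ≤ w i * f (a i) := by
    intro i
    by_cases hiP : i ∈ Pset X1 Y1 X2 Y2
    · exact mul_nonneg (hP i hiP) (le_of_lt (hfP i hiP))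
    by_cases hiN : i ∈ Nset X1 Y1 X2 Y2
    · nlinarith [hN i hiN, hfN i hiN]
    by_cases hiZ : i ∈ Zset X1 Y1 X2 Y2
    · rw [hfZ i hiZ, mul_zero]
    · rw [h0 i (by simp [Finset.mem_union, hiP, hiN, hiZ]), zero_mul]
  have hstrict : 0 < w i0 * f (a i0) := by
    rcases Finset.mem_union.mp hi0mem with hiP | hiN
    · exact mul_pos (lt_of_le_of_ne (hP i0 hiP) (Ne.symm hi0)) (hfP i0 hiP)
    · exact mul_pos_of_neg_of_neg (lt_of_le_of_ne (hN i0 hiN) hi0) (hfN i0 hiN)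
  have : 0 < ∑ i, w i * f (a i) :=
    Finset.sum_pos' (fun i _ => hnonneg i) ⟨i0, Finset.mem_univ _, hstrict⟩
  linarith [key, this]

lemma core_push (S T : Finset (Fin n)) (hST : Disjoint S T) (w lam : Fin n → ℝ)
    (hwneg : ∀ j ∈ S ∪ T, w j < 0)
    (hsupp : ∀ j, j ∉ S ∪ T → lam j = 0)
    (hsum : ∑ j, lam j = 0)
    (hpos : ∃ j ∈ S ∪ T, 0 < lam j) :
    ∃ t : ℝ, (∀ j ∈ S, w j + t * lam j ≤ 0) ∧
      ((∃ i ∈ T, 0 < w i + t * lam i) ∨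
       (∃ i ∈ S, w i + t * lam i = 0 ∧ ∃ j ∈ S, j ≠ i ∧ w j + t * lam j ≠ 0)) := by
  classical
  set Sp := S.filter (fun j => 0 < lam j) with hSp
  by_cases hSpne : Sp.Nonempty
  · obtain ⟨istar, histar, hmin⟩ := Finset.exists_min_image Sp (fun j => (-w j) / lam j) hSpne
    obtain ⟨histarS, hlamistar⟩ := Finset.mem_filter.mp histar
    have hwistar : w istar < 0 := hwneg istar (Finset.mem_union_left _ histarS)
    set t := (-w istar) / lam istar with ht
    have htpos : 0 < t := div_pos (by linarith) hlamistar
    have histareq : w istar + t * lam istar = 0 := by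
      rw [ht, div_mul_cancel₀ _ (ne_of_gt hlamistar)]; ring
    have hSfeas : ∀ j ∈ S, w j + t * lam j ≤ 0 := by
      intro j hj
      by_cases hlj : 0 < lam j
      · have hjSp : j ∈ Sp := Finset.mem_filter.mpr ⟨hj, hlj⟩
        have := hmin j hjSp
        have : t * lam j ≤ -w j := by
          rw [ht]
          calc (-w istar) / lam istar * lam j ≤ (-w j) / lam j * lam j := by
                apply mul_le_mul_of_nonneg_right this (le_of_lt hlj)
          _ = -w j := by field_simp
        linarith
      · push_neg at hlj
        have : t * lam j ≤ 0 := mul_nonpos_of_nonneg_of_nonpos (le_of_lt htpos) hlj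
        have := hwneg j (Finset.mem_union_left _ hj)
        linarith
    by_cases hex : ∃ j ∈ S, j ≠ istar ∧ w j + t * lam j ≠ 0
    · exact ⟨t, hSfeas, Or.inr ⟨istar, histarS, histareq, hex⟩⟩
    · push_neg at hex
      have hallzero : ∀ j ∈ S, w j + t * lam j = 0 := by
        intro j hj
        by_cases hji : j = istar
        · rw [hji]; exact histareq
        · exact hex j hj hji
      have hlamSpos : ∀ j ∈ S, 0 < lam j := by
        intro j hj
        have h1 := hallzero j hj
        have h2 := hwneg j (Finset.mem_union_left _ hj)
        rcases lt_trichotomy (lam j) 0 with h | h | h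
        · nlinarith
        · rw [h] at h1; nlinarith
        · exact h
      have hsplit : ∑ j ∈ S, lam j + ∑ j ∈ T, lam j = 0 := by
        rw [← Finset.sum_union hST]
        rw [← hsum]
        exact Finset.sum_subset (Finset.subset_univ _) (fun x _ hx => hsupp x hx)
      have hSsumpos : 0 < ∑ j ∈ S, lam j :=
        Finset.sum_pos hlamSpos ⟨istar, histarS⟩
      have hTneg : ∃ i ∈ T, lam i < 0 := by
        by_contra hcon
        push_neg at hcon
        have : 0 ≤ ∑ j ∈ T, lam j := Finset.sum_nonneg hcon
        linarith
      obtain ⟨i, hiT, hlami⟩ := hTneg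
      have hwi : w i < 0 := hwneg i (Finset.mem_union_right _ hiT)
      set t' := (1 - w i) / lam i with ht'
      have ht'neg : t' < 0 := div_neg_of_pos_of_neg (by linarith) hlami
      refine ⟨t', fun j hj => ?_, Or.inl ⟨i, hiT, ?_⟩⟩
      · have := hlamSpos j hj
        have := hwneg j (Finset.mem_union_left _ hj)
        nlinarith
      · have hne : lam i ≠ 0 := ne_of_lt hlami
        have : w i + t' * lam i = 1 := by rw [ht', div_mul_cancel₀ _ hne]; ring
        rw [this]; norm_num
  · have hSpempty : ∀ x, x ∉ Sp := by
      simpa [Finset.not_nonempty_iff_eq_empty, Finset.eq_empty_iff_forall_notMem] using hSpne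
    obtain ⟨j0, hj0, hlamj0⟩ := hpos
    have hj0T : j0 ∈ T := by
      rcases Finset.mem_union.mp hj0 with h | h
      · exact absurd (Finset.mem_filter.mpr ⟨h, hlamj0⟩) (hSpempty j0)
      · exact h
    have hwj0 : w j0 < 0 := hwneg j0 hj0
    set t := (1 - w j0) / lam j0 with ht
    have htpos : 0 < t := div_pos (by linarith) hlamj0
    refine ⟨t, fun j hj => ?_, Or.inl ⟨j0, hj0T, ?_⟩⟩
    · have hlj : ¬ (0 < lam j) := by
        intro hc
        exact absurd (Finset.mem_filter.mpr ⟨hj, hc⟩) (hSpempty j)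
      push_neg at hlj
      have := hwneg j (Finset.mem_union_left _ hj)
      nlinarith
    · have hne : lam j0 ≠ 0 := ne_of_gt hlamj0
      have : w j0 + t * lam j0 = 1 := by rw [ht, div_mul_cancel₀ _ hne]; ring
      rw [this]; norm_num

lemma isClosed_add_of_compact {E : Type*} [NormedAddCommGroup E] {s t : Set E}
    (hs : IsCompact s) (ht : IsClosed t) : IsClosed (s + t) := by
  rw [← isSeqClosed_iff_isClosed]
  intro u x hu hx
  have hchoice : ∀ m : ℕ, ∃ p ∈ s, ∃ q ∈ t, p + q = u m := fun m => Set.mem_add.mp (hu m)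
  choose p hp q hq hpq using hchoice
  obtain ⟨pl, hpl, φ, hφ, hφtend⟩ := hs.tendsto_subseq hp
  have hqtend : Filter.Tendsto (fun m => q (φ m)) Filter.atTop (nhds (x - pl)) := by
    have : (fun m => q (φ m)) = fun m => u (φ m) - p (φ m) := by
      funext m; rw [← hpq (φ m)]; abel
    rw [this]
    exact ((hx.comp hφ.tendsto_atTop).sub hφtend)
  have hxm : x - pl ∈ t := ht.mem_of_tendsto hqtend (Filter.Eventually.of_forall fun m => hq _)
  have : x = pl + (x - pl) := by abel
  rw [this]
  exact Set.add_mem_add hpl hxm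

lemma exists_witness_of_not_sep {a : Fin n → Fin d → ℝ} {X1 Y1 X2 Y2 : Finset (Fin n)}
    (hinj : Function.Injective a) (h1 : X1 ⊆ Y1) (h2 : X2 ⊆ Y2)
    (hsep : ¬ SeparatedTiles a X1 Y1 X2 Y2) : ∃ w, IsWitness a X1 Y1 X2 Y2 w := by
  classical
  set P := Pset X1 Y1 X2 Y2 with hP
  set N := Nset X1 Y1 X2 Y2 with hN
  set Z := Zset X1 Y1 X2 Y2 with hZ
  -- disjointness facts
  have hPN : ∀ i, i ∈ P → i ∉ N := by
    intro i hiP hiN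
    rw [hP, Pset, Finset.mem_union] at hiP
    rw [hN, Nset, Finset.mem_union] at hiN
    simp only [Finset.mem_sdiff] at hiP hiN
    rcases hiP with ⟨h3, h4⟩ | ⟨h3, h4⟩ <;> rcases hiN with ⟨h5, h6⟩ | ⟨h5, h6⟩ <;>
      first
        | exact h4 h5
        | exact h6 h3
        | exact h6 (h1 h3)
        | exact h4 (h2 h5)
  have hPZ : ∀ i, i ∈ P → i ∉ Z := by
    intro i hiP hiZ
    rw [hP, Pset, Finset.mem_union] at hiP
    rw [hZ, Zset] at hiZ
    simp only [Finset.mem_sdiff, Finset.mem_inter, Finset.mem_union] at hiP hiZ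
    rcases hiP with ⟨h3, _⟩ | ⟨_, h4⟩
    · exact hiZ.2 (Or.inl h3)
    · exact h4 hiZ.1.2
  have hNZ : ∀ i, i ∈ N → i ∉ Z := by
    intro i hiN hiZ
    rw [hN, Nset, Finset.mem_union] at hiN
    rw [hZ, Zset] at hiZ
    simp only [Finset.mem_sdiff, Finset.mem_inter, Finset.mem_union] at hiN hiZ
    rcases hiN with ⟨h3, _⟩ | ⟨_, h4⟩
    · exact hiZ.2 (Or.inr h3)
    · exact h4 hiZ.1.1
  set ah : Fin n → (Fin d → ℝ) × ℝ := fun i => (a i, 1) with hah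
  have ahinj : Function.Injective ah := by
    intro i j hij
    exact hinj (congrArg Prod.fst hij)
  set b : Fin n → (Fin d → ℝ) × ℝ := fun i => if i ∈ P then ah i else -ah i with hb
  by_cases hPNe : P ∪ N = ∅
  · exfalso
    apply hsep
    refine ⟨AffineMap.const ℝ (Fin d → ℝ) (0:ℝ), ?_, ?_, ?_⟩
    · intro i hi
      exact absurd (Finset.eq_empty_iff_forall_notMem.mp hPNe i
        (Finset.mem_union_left _ (hP ▸ hi))) (by simp)
    · intro i hi
      exact absurd (Finset.eq_empty_iff_forall_notMem.mp hPNe i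
        (Finset.mem_union_right _ (hN ▸ hi))) (by simp)
    · intro i _; rfl
  · have binjPN : ∀ i ∈ P ∪ N, ∀ j ∈ P ∪ N, b i = b j → i = j := by
      intro i _ j _ hij
      rw [hb] at hij
      simp only at hij
      by_cases hiP : i ∈ P <;> by_cases hjP : j ∈ P <;> simp [hiP, hjP] at hij
      · exact ahinj hij
      · exact absurd (congrArg Prod.snd hij) (by simp [hah]; norm_num)
      · exact absurd (congrArg Prod.snd hij) (by simp [hah]; norm_num)
      · exact ahinj hij
    set U : Submodule ℝ ((Fin d → ℝ) × ℝ) := Submodule.span ℝ (↑(Z.image ah)) with hU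
    set K : Set ((Fin d → ℝ) × ℝ) :=
      convexHull ℝ (((P ∪ N).image b : Finset ((Fin d → ℝ) × ℝ)) : Set ((Fin d → ℝ) × ℝ))
        + (U : Set ((Fin d → ℝ) × ℝ)) with hK
    by_cases h0 : (0 : (Fin d → ℝ) × ℝ) ∈ K
    · -- extract witness
      obtain ⟨c, hc, z, hz, hcz⟩ := Set.mem_add.mp h0
      rw [Finset.convexHull_eq] at hc
      obtain ⟨μ, hμ0, hμ1, hμc⟩ := hc
      rw [Finset.centerMass_eq_of_sum_1 _ _ hμ1] at hμc
      obtain ⟨g, -, hg⟩ := Submodule.mem_span_finset.mp hz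
      set w : Fin n → ℝ := fun i =>
        if i ∈ P then μ (b i) else if i ∈ N then -(μ (b i)) else if i ∈ Z then g (ah i) else 0
        with hw
      have hwsmul : ∀ i, w i • ah i = (if i ∈ P ∪ N then μ (b i) • b i else
          if i ∈ Z then g (ah i) • ah i else 0) := by
        intro i
        by_cases hiP : i ∈ P
        · simp [hw, hb, hiP, Finset.mem_union]
        · by_cases hiN : i ∈ N
          · simp [hw, hb, hiP, hiN, Finset.mem_union]
          · by_cases hiZ : i ∈ Z <;> simp [hw, hiP, hiN, hiZ, Finset.mem_union]
      have hsum : ∑ i, w i • ah i = 0 := by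
        have hdisjPNZ : Disjoint (P ∪ N) Z := by
          rw [Finset.disjoint_left]
          intro i hi
          rcases Finset.mem_union.mp hi with h | h
          · exact hPZ i h
          · exact hNZ i h
        have e0 : ∑ i, w i • ah i = ∑ i ∈ (P ∪ N) ∪ Z, w i • ah i := by
          refine (Finset.sum_subset (Finset.subset_univ _) fun i _ hi => ?_).symm
          rw [hwsmul i]
          have hi1 : i ∉ P ∪ N := fun hc' => hi (Finset.mem_union_left _ hc')
          have hi2 : i ∉ Z := fun hc' => hi (Finset.mem_union_right _ hc')
          simp [hi1, hi2]
        have e1 : ∑ i, w i • ah i = ∑ i ∈ P ∪ N, μ (b i) • b i + ∑ i ∈ Z, g (ah i) • ah i := by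
          rw [e0, Finset.sum_union hdisjPNZ]
          congr 1
          · refine Finset.sum_congr rfl fun i hi => ?_
            rw [hwsmul i]; simp [hi]
          · refine Finset.sum_congr rfl fun i hi => ?_
            have : i ∉ P ∪ N := fun hc' => Finset.disjoint_left.mp hdisjPNZ hc' hi
            rw [hwsmul i]; simp [this, hi]
        have e2 : ∑ i ∈ P ∪ N, μ (b i) • b i = c := by
          rw [← hμc, Finset.sum_image binjPN]
          simp only [id_eq]
        have e3 : ∑ i ∈ Z, g (ah i) • ah i = z := by
          rw [← hg, Finset.sum_image (fun i _ j _ hij => ahinj hij)]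
        rw [e1, e2, e3, hcz]
      refine ⟨w, ?_, ?_, ?_, ?_, ?_, ?_⟩
      · intro i hi
        have : w i = μ (b i) := by simp [hw, hP ▸ hi]
        rw [this]
        exact hμ0 _ (Finset.mem_image_of_mem b (Finset.mem_union_left _ (hP ▸ hi)))
      · intro i hi
        have hiP : i ∉ P := fun hc' => hPN i hc' (hN ▸ hi)
        have : w i = -(μ (b i)) := by simp [hw, hiP, hN ▸ hi]
        rw [this, neg_nonpos]
        exact hμ0 _ (Finset.mem_image_of_mem b (Finset.mem_union_right _ (hN ▸ hi)))
      · intro i hi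
        simp only [Finset.mem_union] at hi
        push_neg at hi
        simp [hw, hP, hN, hZ, hi.1.1, hi.1.2, hi.2]
      · -- strictness
        have : ∃ y ∈ (P ∪ N).image b, μ y ≠ 0 := by
          by_contra hc'
          push_neg at hc'
          rw [Finset.sum_eq_zero hc'] at hμ1
          norm_num at hμ1
        obtain ⟨y, hy, hμy⟩ := this
        obtain ⟨i, hi, rfl⟩ := Finset.mem_image.mp hy
        refine ⟨i, hi, ?_⟩
        rcases Finset.mem_union.mp hi with h | h
        · simpa [hw, h] using hμy
        · have hiP : i ∉ P := fun hc' => hPN i hc' h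
          simpa [hw, hiP, h] using hμy
      · have := congrArg Prod.fst hsum
        simpa [Prod.fst_sum] using this
      · have := congrArg Prod.snd hsum
        simpa [Prod.snd_sum, hah] using this
    · -- separation: contradiction with hsep
      exfalso
      apply hsep
      have hKconv : Convex ℝ K := by
        exact (convex_convexHull ℝ _).add U.convex
      have hKclosed : IsClosed K := by
        apply isClosed_add_of_compact
        · exact (Finset.finite_toSet _).isCompact_convexHull ℝ
        · exact U.closed_of_finiteDimensional
      obtain ⟨f, u, hfu, hfK⟩ := geometric_hahn_banach_point_closed hKconv hKclosed h0
      have hu0 : 0 < u := by simpa using hfu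
      obtain ⟨i0, hi0⟩ := Finset.nonempty_of_ne_empty hPNe
      have hbK : ∀ i ∈ P ∪ N, b i ∈ K := by
        intro i hi
        have hmem : b i ∈ convexHull ℝ
            (((P ∪ N).image b : Finset ((Fin d → ℝ) × ℝ)) : Set ((Fin d → ℝ) × ℝ)) :=
          subset_convexHull ℝ _ (Finset.mem_coe.mpr (Finset.mem_image_of_mem b hi))
        have := Set.add_mem_add hmem U.zero_mem
        simpa [hK] using this
      have hfb : ∀ i ∈ P ∪ N, u < f (b i) := fun i hi => hfK _ (hbK i hi)
      have hfU : ∀ z ∈ U, f z = 0 := by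
        intro z hzU
        by_contra hne
        set r := (u - f (b i0) - 1) / f z with hr
        have hmem : b i0 + r • z ∈ K := by
          refine Set.add_mem_add ?_ (U.smul_mem r hzU)
          exact subset_convexHull ℝ _ (Finset.mem_coe.mpr (Finset.mem_image_of_mem b hi0))
        have hlt := hfK _ hmem
        have heq : f (b i0 + r • z) = u - 1 := by
          rw [map_add, map_smul, smul_eq_mul, hr]
          field_simp
          ring
        rw [heq] at hlt
        linarith
      refine ⟨{ toFun := fun x => f (x, 1)
                linear := f.toLinearMap.comp (LinearMap.inl ℝ (Fin d → ℝ) ℝ)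
                map_vadd' := fun p v => by
                  show f (v + p, 1) = f (v, 0) + f (p, 1)
                  rw [← map_add]
                  congr 1
                  simp [Prod.ext_iff] }, ?_, ?_, ?_⟩
      · intro i hi
        have hiP : i ∈ P := by rw [hP]; simpa [Pset] using hi
        have hbi : b i = (a i, 1) := by simp [hb, hah, hiP]
        have := hfb i (Finset.mem_union_left _ hiP)
        rw [hbi] at this
        exact lt_trans hu0 this
      · intro i hi
        have hiN : i ∈ N := by rw [hN]; simpa [Nset] using hi
        have hiP : i ∉ P := fun hc' => hPN i hc' hiN
        have hbi : b i = -(a i, 1) := by simp [hb, hah, hiP]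
        have := hfb i (Finset.mem_union_right _ hiN)
        rw [hbi, map_neg] at this
        simp only [AffineMap.coe_mk]
        linarith
      · intro i hi
        have hiZ : i ∈ Z := by rw [hZ]; simpa [Zset] using hi
        have : (a i, (1:ℝ)) ∈ U := by
          rw [hU]
          exact Submodule.subset_span (Finset.mem_coe.mpr (Finset.mem_image_of_mem ah hiZ))
        exact hfU _ this

lemma card_ge_three_of_not_fine {a : Fin n → Fin d → ℝ} (hinj : Function.Injective a)
    {X Y : Finset (Fin n)} (hnf : ¬ FineTile a X Y) : 3 ≤ (Y \ X).card := by
  by_contra h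
  push_neg at h
  apply hnf
  rw [FineTile]
  interval_cases hc : (Y \ X).card
  · have : Subsingleton {x // x ∈ Y \ X} :=
      Finset.card_le_one_iff_subsingleton_coe.mp (by omega)
    exact affineIndependent_of_subsingleton ℝ _
  · have : Subsingleton {x // x ∈ Y \ X} :=
      Finset.card_le_one_iff_subsingleton_coe.mp (by omega)
    exact affineIndependent_of_subsingleton ℝ _
  · obtain ⟨x, y, hxy, hs⟩ := Finset.card_eq_two.mp hc
    have hx : x ∈ Y \ X := by rw [hs]; simp
    have hy : y ∈ Y \ X := by rw [hs]; simp
    let e : Fin 2 ≃ {i // i ∈ Y \ X} :=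
      { toFun := ![⟨x, hx⟩, ⟨y, hy⟩]
        invFun := fun i => if (i : Fin n) = x then 0 else 1
        left_inv := by
          intro j
          fin_cases j <;> simp [hxy.symm] <;> simp [hxy]
        right_inv := by
          rintro ⟨j, hj⟩
          rw [hs] at hj
          rcases Finset.mem_insert.mp hj with rfl | hj'
          · simp
          · have : j = y := Finset.mem_singleton.mp hj'
            subst this
            simp [Ne.symm hxy, hxy] }
    rw [← affineIndependent_equiv e]
    have : (fun i : {i // i ∈ Y \ X} => a i) ∘ e = ![a x, a y] := by
      funext j
      fin_cases j <;> simp [e]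
    rw [this]
    exact affineIndependent_of_ne ℝ (hinj.ne hxy)

lemma exists_dep {a : Fin n → Fin d → ℝ} {X Y : Finset (Fin n)}
    (hnf : ¬ FineTile a X Y) :
    ∃ lam : Fin n → ℝ, (∀ i, i ∉ Y \ X → lam i = 0) ∧ (∑ i, lam i = 0) ∧
      (∑ i, lam i • a i) = 0 ∧ ∃ i, lam i ≠ 0 := by
  classical
  rw [FineTile, affineIndependent_iff] at hnf
  push_neg at hnf
  obtain ⟨s, w0, hw0sum, hw0comb, i0, hi0s, hi0⟩ := hnf
  set lam : Fin n → ℝ :=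
    fun i => if h : i ∈ Y \ X then (if (⟨i, h⟩ : {x // x ∈ Y \ X}) ∈ s then w0 ⟨i, h⟩ else 0)
      else 0 with hlam
  have hsupp : ∀ i, i ∉ Y \ X → lam i = 0 := fun i hi => by
    rw [hlam]; simp only []; rw [dif_neg hi]
  have conv1 : ∀ x ∈ (Y \ X).attach, lam ↑x = (if x ∈ s then w0 x else 0) := by
    intro x _
    rw [hlam]
    simp only []
    rw [dif_pos x.2, Subtype.coe_eta]
  have conv2 : ∀ x ∈ (Y \ X).attach,
      lam ↑x • a ↑x = (if x ∈ s then w0 x • a ↑x else 0) := by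
    intro x hx
    rw [conv1 x hx, ite_smul, zero_smul]
  have e2 : ∑ i, lam i = ∑ x ∈ s, w0 x := by
    rw [← Finset.sum_subset (Finset.subset_univ (Y \ X)) (fun i _ hi => hsupp i hi),
        ← Finset.sum_attach (Y \ X) lam, Finset.sum_congr rfl conv1,
        ← Finset.univ_eq_attach, Finset.sum_ite_mem, Finset.univ_inter]
  have e4 : ∑ i, lam i • a i = ∑ x ∈ s, w0 x • a ↑x := by
    rw [← Finset.sum_subset (Finset.subset_univ (Y \ X))
          (fun i _ hi => by rw [hsupp i hi, zero_smul]),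
        ← Finset.sum_attach (Y \ X) (fun i => lam i • a i), Finset.sum_congr rfl conv2,
        ← Finset.univ_eq_attach, Finset.sum_ite_mem, Finset.univ_inter]
  refine ⟨lam, hsupp, by rw [e2, hw0sum], by rw [e4, hw0comb], ⟨↑i0, ?_⟩⟩
  have : lam ↑i0 = w0 i0 := by
    rw [hlam]
    simp only []
    rw [dif_pos i0.2, Subtype.coe_eta, if_pos hi0s]
  rw [this]
  exact hi0

section WitnessMoves

variable {a : Fin n → Fin d → ℝ} {X1 Y1 X2 Y2 : Finset (Fin n)} {w' : Fin n → ℝ} {i : Fin n}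

/-- insert into `X1`, where `i ∉ Y2` : all sets unchanged. -/
lemma witness_insert_outer (h2 : X2 ⊆ Y2) (hi : i ∈ Y1 \ X1) (hiY2 : i ∉ Y2)
    (hw : IsWitness a X1 Y1 X2 Y2 w') : IsWitness a (insert i X1) Y1 X2 Y2 w' := by
  obtain ⟨hiY1, hiX1⟩ := Finset.mem_sdiff.mp hi
  have hiX2 : i ∉ X2 := fun hc => hiY2 (h2 hc)
  have EP : Pset (insert i X1) Y1 X2 Y2 = Pset X1 Y1 X2 Y2 := by
    ext j
    rcases eq_or_ne j i with rfl | hne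
    · simp [Pset, hiX2, hiY1, hiY2]
    · simp only [Pset, Finset.mem_union, Finset.mem_sdiff, Finset.mem_insert, hne]
      try tauto
  have EN : Nset (insert i X1) Y1 X2 Y2 = Nset X1 Y1 X2 Y2 := by
    ext j
    rcases eq_or_ne j i with rfl | hne
    · simp [Nset, hiX2, hiY1]
    · simp only [Nset, Finset.mem_union, Finset.mem_sdiff, Finset.mem_insert, hne]
      try tauto
  have EZ : Zset (insert i X1) Y1 X2 Y2 = Zset X1 Y1 X2 Y2 := by
    ext j
    rcases eq_or_ne j i with rfl | hne
    · simp [Zset, hiY2]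
    · simp only [Zset, Finset.mem_sdiff, Finset.mem_inter, Finset.mem_union, Finset.mem_insert,
        hne]
      try tauto
  rw [IsWitness, EP, EN, EZ]
  exact hw

/-- erase from `Y1`, where `i ∈ X2` : all sets unchanged. -/
lemma witness_erase_inner (h2 : X2 ⊆ Y2) (hi : i ∈ Y1 \ X1) (hiX2 : i ∈ X2)
    (hw : IsWitness a X1 Y1 X2 Y2 w') : IsWitness a X1 (Y1.erase i) X2 Y2 w' := by
  obtain ⟨hiY1, hiX1⟩ := Finset.mem_sdiff.mp hi
  have hiY2 : i ∈ Y2 := h2 hiX2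
  have EP : Pset X1 (Y1.erase i) X2 Y2 = Pset X1 Y1 X2 Y2 := by
    ext j
    rcases eq_or_ne j i with rfl | hne
    · simp [Pset, hiX2, hiX1, hiY2]
    · simp only [Pset, Finset.mem_union, Finset.mem_sdiff, Finset.mem_erase, hne, ne_eq,
        not_false_iff, true_and]
      try tauto
  have EN : Nset X1 (Y1.erase i) X2 Y2 = Nset X1 Y1 X2 Y2 := by
    ext j
    rcases eq_or_ne j i with rfl | hne
    · simp [Nset, hiX2, hiX1, hiY1, hiY2]
    · simp only [Nset, Finset.mem_union, Finset.mem_sdiff, Finset.mem_erase, hne, ne_eq,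
        not_false_iff, true_and]
      try tauto
  have EZ : Zset X1 (Y1.erase i) X2 Y2 = Zset X1 Y1 X2 Y2 := by
    ext j
    rcases eq_or_ne j i with rfl | hne
    · simp [Zset, hiX2]
    · simp only [Zset, Finset.mem_sdiff, Finset.mem_inter, Finset.mem_union, Finset.mem_erase,
        hne, ne_eq, not_false_iff, true_and]
      try tauto
  rw [IsWitness, EP, EN, EZ]
  exact hw

/-- insert into `X1`, where `i ∈ Y2 \ X2`. -/
lemma witness_insert_mid (hi : i ∈ Y1 \ X1) (hiY2 : i ∈ Y2) (hiX2 : i ∉ X2)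
    (hP : ∀ j ∈ Pset X1 Y1 X2 Y2, 0 ≤ w' j) (hN : ∀ j ∈ Nset X1 Y1 X2 Y2, w' j ≤ 0)
    (h0 : ∀ j, j ∉ Pset X1 Y1 X2 Y2 ∪ Nset X1 Y1 X2 Y2 ∪ Zset X1 Y1 X2 Y2 → w' j = 0)
    (hwi : 0 ≤ w' i)
    (hstrict : (∃ j ∈ Pset X1 Y1 X2 Y2 ∪ Nset X1 Y1 X2 Y2, w' j ≠ 0) ∨ 0 < w' i)
    (hsa : (∑ j, w' j • a j) = 0) (hs1 : (∑ j, w' j) = 0) :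
    IsWitness a (insert i X1) Y1 X2 Y2 w' := by
  obtain ⟨hiY1, hiX1⟩ := Finset.mem_sdiff.mp hi
  have EP : Pset (insert i X1) Y1 X2 Y2 = insert i (Pset X1 Y1 X2 Y2) := by
    ext j
    rcases eq_or_ne j i with rfl | hne
    · simp [Pset, hiX2]
    · simp only [Pset, Finset.mem_union, Finset.mem_sdiff, Finset.mem_insert, hne, false_or]
      try tauto
  have EN : Nset (insert i X1) Y1 X2 Y2 = Nset X1 Y1 X2 Y2 := by
    ext j
    rcases eq_or_ne j i with rfl | hne
    · simp [Nset, hiX2, hiY1]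
    · simp only [Nset, Finset.mem_union, Finset.mem_sdiff, Finset.mem_insert, hne]
      try tauto
  have EZ : Zset (insert i X1) Y1 X2 Y2 = (Zset X1 Y1 X2 Y2).erase i := by
    ext j
    rcases eq_or_ne j i with rfl | hne
    · simp [Zset]
    · simp only [Zset, Finset.mem_sdiff, Finset.mem_inter, Finset.mem_union, Finset.mem_insert,
        Finset.mem_erase, hne, ne_eq, not_false_iff, true_and]
      try tauto
  rw [IsWitness, EP, EN, EZ]
  refine ⟨?_, hN, ?_, ?_, hsa, hs1⟩
  · intro j hj
    rcases Finset.mem_insert.mp hj with rfl | hj'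
    · exact hwi
    · exact hP j hj'
  · intro j hj
    simp only [Finset.mem_union, Finset.mem_insert, Finset.mem_erase] at hj
    push_neg at hj
    rcases eq_or_ne j i with rfl | hne
    · exact absurd rfl hj.1.1.1
    · refine h0 j ?_
      simp only [Finset.mem_union]
      push_neg
      exact ⟨⟨hj.1.1.2, hj.1.2⟩, fun hc => (hj.2 hne) hc⟩
  · rcases hstrict with ⟨j, hj, hjne⟩ | hpos
    · refine ⟨j, ?_, hjne⟩
      simp only [Finset.mem_union, Finset.mem_insert] at hj ⊢
      try tauto
    · exact ⟨i, by simp, ne_of_gt hpos⟩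

/-- insert into `X1`, where `i ∈ X2`. -/
lemma witness_insert_X2 (h2 : X2 ⊆ Y2) (hi : i ∈ Y1 \ X1) (hiX2 : i ∈ X2)
    (hP : ∀ j ∈ Pset X1 Y1 X2 Y2, 0 ≤ w' j) (hN : ∀ j ∈ Nset X1 Y1 X2 Y2, w' j ≤ 0)
    (h0 : ∀ j, j ∉ Pset X1 Y1 X2 Y2 ∪ Nset X1 Y1 X2 Y2 ∪ Zset X1 Y1 X2 Y2 → w' j = 0)
    (hwi : w' i = 0)
    (hstrict : ∃ j ∈ Pset X1 Y1 X2 Y2 ∪ Nset X1 Y1 X2 Y2, w' j ≠ 0)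
    (hsa : (∑ j, w' j • a j) = 0) (hs1 : (∑ j, w' j) = 0) :
    IsWitness a (insert i X1) Y1 X2 Y2 w' := by
  obtain ⟨hiY1, hiX1⟩ := Finset.mem_sdiff.mp hi
  have hiY2 : i ∈ Y2 := h2 hiX2
  have EP : Pset (insert i X1) Y1 X2 Y2 = Pset X1 Y1 X2 Y2 := by
    ext j
    rcases eq_or_ne j i with rfl | hne
    · simp [Pset, hiX2, hiY1, hiY2]
    · simp only [Pset, Finset.mem_union, Finset.mem_sdiff, Finset.mem_insert, hne]
      try tauto
  have EN : Nset (insert i X1) Y1 X2 Y2 = (Nset X1 Y1 X2 Y2).erase i := by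
    ext j
    rcases eq_or_ne j i with rfl | hne
    · simp [Nset, hiY1]
    · simp only [Nset, Finset.mem_union, Finset.mem_sdiff, Finset.mem_insert, Finset.mem_erase,
        hne, ne_eq, not_false_iff, true_and]
      try tauto
  have EZ : Zset (insert i X1) Y1 X2 Y2 = Zset X1 Y1 X2 Y2 := by
    ext j
    rcases eq_or_ne j i with rfl | hne
    · simp [Zset, hiX2]
    · simp only [Zset, Finset.mem_sdiff, Finset.mem_inter, Finset.mem_union, Finset.mem_insert,
        hne]
      try tauto
  rw [IsWitness, EP, EN, EZ]
  refine ⟨hP, ?_, ?_, ?_, hsa, hs1⟩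
  · intro j hj
    exact hN j (Finset.mem_of_mem_erase hj)
  · intro j hj
    simp only [Finset.mem_union, Finset.mem_erase] at hj
    push_neg at hj
    rcases eq_or_ne j i with rfl | hne
    · exact hwi
    · refine h0 j ?_
      simp only [Finset.mem_union]
      push_neg
      exact ⟨⟨hj.1.1, fun hc => (hj.1.2 hne) hc⟩, hj.2⟩
  · obtain ⟨j, hj, hjne⟩ := hstrict
    have hjnei : j ≠ i := fun hc => hjne (hc ▸ hwi)
    refine ⟨j, ?_, hjne⟩
    simp only [Finset.mem_union, Finset.mem_erase] at hj ⊢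
    tauto

/-- erase from `Y1`, where `i ∈ Y2 \ X2`. -/
lemma witness_erase_mid (hi : i ∈ Y1 \ X1) (hiY2 : i ∈ Y2) (hiX2 : i ∉ X2)
    (hP : ∀ j ∈ Pset X1 Y1 X2 Y2, 0 ≤ w' j) (hN : ∀ j ∈ Nset X1 Y1 X2 Y2, w' j ≤ 0)
    (h0 : ∀ j, j ∉ Pset X1 Y1 X2 Y2 ∪ Nset X1 Y1 X2 Y2 ∪ Zset X1 Y1 X2 Y2 → w' j = 0)
    (hwi : w' i ≤ 0)
    (hstrict : (∃ j ∈ Pset X1 Y1 X2 Y2 ∪ Nset X1 Y1 X2 Y2, w' j ≠ 0) ∨ w' i < 0)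
    (hsa : (∑ j, w' j • a j) = 0) (hs1 : (∑ j, w' j) = 0) :
    IsWitness a X1 (Y1.erase i) X2 Y2 w' := by
  obtain ⟨hiY1, hiX1⟩ := Finset.mem_sdiff.mp hi
  have EP : Pset X1 (Y1.erase i) X2 Y2 = Pset X1 Y1 X2 Y2 := by
    ext j
    rcases eq_or_ne j i with rfl | hne
    · simp [Pset, hiX1, hiY2]
    · simp only [Pset, Finset.mem_union, Finset.mem_sdiff, Finset.mem_erase, hne, ne_eq,
        not_false_iff, true_and]
      try tauto
  have EN : Nset X1 (Y1.erase i) X2 Y2 = insert i (Nset X1 Y1 X2 Y2) := by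
    ext j
    rcases eq_or_ne j i with rfl | hne
    · simp [Nset, hiY2]
    · simp only [Nset, Finset.mem_union, Finset.mem_sdiff, Finset.mem_erase, Finset.mem_insert,
        hne, ne_eq, not_false_iff, true_and, false_or]
      try tauto
  have EZ : Zset X1 (Y1.erase i) X2 Y2 = (Zset X1 Y1 X2 Y2).erase i := by
    ext j
    rcases eq_or_ne j i with rfl | hne
    · simp [Zset]
    · simp only [Zset, Finset.mem_sdiff, Finset.mem_inter, Finset.mem_union, Finset.mem_erase,
        hne, ne_eq, not_false_iff, true_and]
      try tauto
  rw [IsWitness, EP, EN, EZ]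
  refine ⟨hP, ?_, ?_, ?_, hsa, hs1⟩
  · intro j hj
    rcases Finset.mem_insert.mp hj with rfl | hj'
    · exact hwi
    · exact hN j hj'
  · intro j hj
    simp only [Finset.mem_union, Finset.mem_insert, Finset.mem_erase] at hj
    push_neg at hj
    rcases eq_or_ne j i with rfl | hne
    · exact absurd rfl hj.1.2.1
    · refine h0 j ?_
      simp only [Finset.mem_union]
      push_neg
      exact ⟨⟨hj.1.1, hj.1.2.2⟩, fun hc => (hj.2 hne) hc⟩
  · rcases hstrict with ⟨j, hj, hjne⟩ | hneg
    · refine ⟨j, ?_, hjne⟩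
      simp only [Finset.mem_union, Finset.mem_insert] at hj ⊢
      try tauto
    · exact ⟨i, by simp, ne_of_lt hneg⟩

/-- erase from `Y1`, where `i ∉ Y2`. -/
lemma witness_erase_outer (h2 : X2 ⊆ Y2) (hi : i ∈ Y1 \ X1) (hiY2 : i ∉ Y2)
    (hP : ∀ j ∈ Pset X1 Y1 X2 Y2, 0 ≤ w' j) (hN : ∀ j ∈ Nset X1 Y1 X2 Y2, w' j ≤ 0)
    (h0 : ∀ j, j ∉ Pset X1 Y1 X2 Y2 ∪ Nset X1 Y1 X2 Y2 ∪ Zset X1 Y1 X2 Y2 → w' j = 0)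
    (hwi : w' i = 0)
    (hstrict : ∃ j ∈ Pset X1 Y1 X2 Y2 ∪ Nset X1 Y1 X2 Y2, w' j ≠ 0)
    (hsa : (∑ j, w' j • a j) = 0) (hs1 : (∑ j, w' j) = 0) :
    IsWitness a X1 (Y1.erase i) X2 Y2 w' := by
  obtain ⟨hiY1, hiX1⟩ := Finset.mem_sdiff.mp hi
  have hiX2 : i ∉ X2 := fun hc => hiY2 (h2 hc)
  have EP : Pset X1 (Y1.erase i) X2 Y2 = (Pset X1 Y1 X2 Y2).erase i := by
    ext j
    rcases eq_or_ne j i with rfl | hne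
    · simp [Pset, hiX1]
    · simp only [Pset, Finset.mem_union, Finset.mem_sdiff, Finset.mem_erase, hne, ne_eq,
        not_false_iff, true_and]
      try tauto
  have EN : Nset X1 (Y1.erase i) X2 Y2 = Nset X1 Y1 X2 Y2 := by
    ext j
    rcases eq_or_ne j i with rfl | hne
    · simp [Nset, hiX2, hiY2, hiY1]
    · simp only [Nset, Finset.mem_union, Finset.mem_sdiff, Finset.mem_erase, hne, ne_eq,
        not_false_iff, true_and]
      try tauto
  have EZ : Zset X1 (Y1.erase i) X2 Y2 = Zset X1 Y1 X2 Y2 := by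
    ext j
    rcases eq_or_ne j i with rfl | hne
    · simp [Zset, hiY2]
    · simp only [Zset, Finset.mem_sdiff, Finset.mem_inter, Finset.mem_union, Finset.mem_erase,
        hne, ne_eq, not_false_iff, true_and]
      try tauto
  rw [IsWitness, EP, EN, EZ]
  refine ⟨?_, hN, ?_, ?_, hsa, hs1⟩
  · intro j hj
    exact hP j (Finset.mem_of_mem_erase hj)
  · intro j hj
    simp only [Finset.mem_union, Finset.mem_erase] at hj
    push_neg at hj
    rcases eq_or_ne j i with rfl | hne
    · exact hwi
    · refine h0 j ?_
      simp only [Finset.mem_union]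
      push_neg
      exact ⟨⟨fun hc => (hj.1.1 hne) hc, hj.1.2⟩, hj.2⟩
  · obtain ⟨j, hj, hjne⟩ := hstrict
    have hjnei : j ≠ i := fun hc => hjne (hc ▸ hwi)
    refine ⟨j, ?_, hjne⟩
    simp only [Finset.mem_union, Finset.mem_erase] at hj ⊢
    tauto

end WitnessMoves

lemma exists_add_move {a : Fin n → Fin d → ℝ} {X1 Y1 X2 Y2 : Finset (Fin n)} {w : Fin n → ℝ}
    (h2 : X2 ⊆ Y2)
    (hw : IsWitness a X1 Y1 X2 Y2 w) (hnf : ¬ FineTile a X1 Y1) :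
    ∃ i ∈ Y1 \ X1, ∃ w', IsWitness a (insert i X1) Y1 X2 Y2 w' := by
  classical
  obtain ⟨hP, hN, h0, hstr, hsa, hs1⟩ := hw
  by_cases hc1 : ∃ i ∈ Y1 \ X1, i ∉ Y2
  · obtain ⟨i, hi, hiY2⟩ := hc1
    exact ⟨i, hi, w, witness_insert_outer h2 hi hiY2 ⟨hP, hN, h0, hstr, hsa, hs1⟩⟩
  push_neg at hc1
  by_cases hc2 : ∃ i ∈ Y1 \ X1, i ∉ X2 ∧ 0 ≤ w i
  · obtain ⟨i, hi, hiX2, hwi⟩ := hc2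
    exact ⟨i, hi, w, witness_insert_mid hi (hc1 i hi) hiX2 hP hN h0 hwi (Or.inl hstr) hsa hs1⟩
  by_cases hc3 : ∃ i ∈ Y1 \ X1, i ∈ X2 ∧ w i = 0
  · obtain ⟨i, hi, hiX2, hwi⟩ := hc3
    exact ⟨i, hi, w, witness_insert_X2 h2 hi hiX2 hP hN h0 hwi hstr hsa hs1⟩
  push_neg at hc2 hc3
  have hwneg : ∀ j ∈ Y1 \ X1, w j < 0 := by
    intro j hj
    by_cases hjX2 : j ∈ X2
    · refine lt_of_le_of_ne (hN j ?_) (hc3 j hj hjX2)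
      exact Finset.mem_union.mpr (Or.inl (Finset.mem_sdiff.mpr ⟨hjX2, (Finset.mem_sdiff.mp hj).2⟩))
    · exact hc2 j hj hjX2
  obtain ⟨lam, hlsupp, hlsum, hlcomb, j0, hj0⟩ := exists_dep hnf
  have hj0D : j0 ∈ Y1 \ X1 := by
    by_contra hcon; exact hj0 (hlsupp j0 hcon)
  set S := (Y1 \ X1).filter (· ∈ X2) with hS
  set T := (Y1 \ X1).filter (· ∉ X2) with hT
  have hSTD : S ∪ T = Y1 \ X1 := by
    ext j; simp only [hS, hT, Finset.mem_union, Finset.mem_filter]; tauto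
  have hdisj : Disjoint S T := by
    rw [Finset.disjoint_left]
    intro j hjS hjT
    exact (Finset.mem_filter.mp hjT).2 (Finset.mem_filter.mp hjS).2
  have horient : ∃ lam' : Fin n → ℝ, (∀ j, j ∉ Y1 \ X1 → lam' j = 0) ∧ (∑ j, lam' j = 0) ∧
      (∑ j, lam' j • a j = 0) ∧ (∃ j ∈ S ∪ T, 0 < lam' j) := by
    rcases lt_or_gt_of_ne hj0 with hneg | hpos
    · refine ⟨-lam, fun j hj => by simp [hlsupp j hj], by simp [hlsum], ?_,
        ⟨j0, hSTD ▸ hj0D, by simp; linarith⟩⟩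
      simp only [Pi.neg_apply, neg_smul, Finset.sum_neg_distrib, hlcomb, neg_zero]
    · exact ⟨lam, hlsupp, hlsum, hlcomb, ⟨j0, hSTD ▸ hj0D, hpos⟩⟩
  obtain ⟨lam', hl'supp, hl'sum, hl'comb, hl'pos⟩ := horient
  have hwnegST : ∀ j ∈ S ∪ T, w j < 0 := fun j hj => hwneg j (hSTD ▸ hj)
  have hl'suppST : ∀ j, j ∉ S ∪ T → lam' j = 0 := fun j hj => hl'supp j (by rwa [← hSTD])
  obtain ⟨t, hSfeas, hopt⟩ := core_push S T hdisj w lam' hwnegST hl'suppST hl'sum hl'pos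
  set w' : Fin n → ℝ := fun j => w j + t * lam' j with hw'
  -- lam' vanishes off D1; D1 ⊆ Y2
  have hlamP : ∀ j ∈ Pset X1 Y1 X2 Y2, lam' j = 0 := by
    intro j hj
    refine hl'supp j ?_
    intro hjD
    obtain ⟨hjY1, hjX1⟩ := Finset.mem_sdiff.mp hjD
    rcases Finset.mem_union.mp hj with hj' | hj'
    · exact hjX1 (Finset.mem_sdiff.mp hj').1
    · exact (Finset.mem_sdiff.mp hj').2 (hc1 j hjD)
  have hND : ∀ j ∈ Nset X1 Y1 X2 Y2, j ∈ Y1 \ X1 → j ∈ S := by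
    intro j hj hjD
    rcases Finset.mem_union.mp hj with hj' | hj'
    · exact Finset.mem_filter.mpr ⟨hjD, (Finset.mem_sdiff.mp hj').1⟩
    · exact absurd (Finset.mem_sdiff.mp hjD).1 (Finset.mem_sdiff.mp hj').2
  have hDunion : ∀ j ∈ Y1 \ X1,
      j ∈ Pset X1 Y1 X2 Y2 ∪ Nset X1 Y1 X2 Y2 ∪ Zset X1 Y1 X2 Y2 := by
    intro j hjD
    obtain ⟨hjY1, hjX1⟩ := Finset.mem_sdiff.mp hjD
    by_cases hjX2 : j ∈ X2
    · exact Finset.mem_union.mpr (Or.inl (Finset.mem_union.mpr (Or.inr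
        (Finset.mem_union.mpr (Or.inl (Finset.mem_sdiff.mpr ⟨hjX2, hjX1⟩))))))
    · refine Finset.mem_union.mpr (Or.inr ?_)
      exact Finset.mem_sdiff.mpr ⟨Finset.mem_inter.mpr ⟨hjY1, hc1 j hjD⟩,
        fun hc => (Finset.mem_union.mp hc).elim hjX1 hjX2⟩
  have hw'P : ∀ j ∈ Pset X1 Y1 X2 Y2, 0 ≤ w' j := by
    intro j hj
    have : w' j = w j := by rw [hw']; simp [hlamP j hj]
    rw [this]; exact hP j hj
  have hw'N : ∀ j ∈ Nset X1 Y1 X2 Y2, w' j ≤ 0 := by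
    intro j hj
    by_cases hjD : j ∈ Y1 \ X1
    · exact hSfeas j (hND j hj hjD)
    · have : w' j = w j := by rw [hw']; simp [hl'supp j hjD]
      rw [this]; exact hN j hj
  have hw'0 : ∀ j, j ∉ Pset X1 Y1 X2 Y2 ∪ Nset X1 Y1 X2 Y2 ∪ Zset X1 Y1 X2 Y2 → w' j = 0 := by
    intro j hj
    have hjD : j ∉ Y1 \ X1 := fun hc => hj (hDunion j hc)
    rw [hw']; simp [hl'supp j hjD, h0 j hj]
  have hsa' : (∑ j, w' j • a j) = 0 := by
    rw [hw']
    have : ∑ j, (w j + t * lam' j) • a j = ∑ j, w j • a j + t • ∑ j, lam' j • a j := by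
      rw [Finset.smul_sum, ← Finset.sum_add_distrib]
      exact Finset.sum_congr rfl fun j _ => by rw [add_smul, mul_smul]
    rw [this, hsa, hl'comb, smul_zero, add_zero]
  have hs1' : (∑ j, w' j) = 0 := by
    rw [hw']
    rw [Finset.sum_add_distrib, hs1, ← Finset.mul_sum, hl'sum, mul_zero, add_zero]
  rcases hopt with ⟨i, hiT, hipos⟩ | ⟨i, hiS, hieq, j, hjS, hjne, hjnz⟩
  · obtain ⟨hiD, hiX2⟩ := Finset.mem_filter.mp hiT
    exact ⟨i, hiD, w', witness_insert_mid hiD (hc1 i hiD) hiX2 hw'P hw'N hw'0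
      (le_of_lt hipos) (Or.inr hipos) hsa' hs1'⟩
  · obtain ⟨hiD, hiX2⟩ := Finset.mem_filter.mp hiS
    obtain ⟨hjD, hjX2⟩ := Finset.mem_filter.mp hjS
    refine ⟨i, hiD, w', witness_insert_X2 h2 hiD hiX2 hw'P hw'N hw'0 hieq ⟨j, ?_, hjnz⟩ hsa' hs1'⟩
    exact Finset.mem_union.mpr (Or.inr (Finset.mem_union.mpr (Or.inl
      (Finset.mem_sdiff.mpr ⟨hjX2, (Finset.mem_sdiff.mp hjD).2⟩))))

lemma exists_rem_move {a : Fin n → Fin d → ℝ} {X1 Y1 X2 Y2 : Finset (Fin n)} {w : Fin n → ℝ}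
    (h2 : X2 ⊆ Y2)
    (hw : IsWitness a X1 Y1 X2 Y2 w) (hnf : ¬ FineTile a X1 Y1) :
    ∃ i ∈ Y1 \ X1, ∃ w', IsWitness a X1 (Y1.erase i) X2 Y2 w' := by
  classical
  obtain ⟨hP, hN, h0, hstr, hsa, hs1⟩ := hw
  by_cases hc1 : ∃ i ∈ Y1 \ X1, i ∈ X2
  · obtain ⟨i, hi, hiX2⟩ := hc1
    exact ⟨i, hi, w, witness_erase_inner h2 hi hiX2 ⟨hP, hN, h0, hstr, hsa, hs1⟩⟩
  push_neg at hc1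
  by_cases hc2 : ∃ i ∈ Y1 \ X1, i ∈ Y2 ∧ w i ≤ 0
  · obtain ⟨i, hi, hiY2, hwi⟩ := hc2
    exact ⟨i, hi, w, witness_erase_mid hi hiY2 (hc1 i hi) hP hN h0 hwi (Or.inl hstr) hsa hs1⟩
  by_cases hc3 : ∃ i ∈ Y1 \ X1, i ∉ Y2 ∧ w i = 0
  · obtain ⟨i, hi, hiY2, hwi⟩ := hc3
    exact ⟨i, hi, w, witness_erase_outer h2 hi hiY2 hP hN h0 hwi hstr hsa hs1⟩
  push_neg at hc2 hc3
  have hwpos : ∀ j ∈ Y1 \ X1, 0 < w j := by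
    intro j hj
    by_cases hjY2 : j ∈ Y2
    · exact hc2 j hj hjY2
    · refine lt_of_le_of_ne (hP j ?_) (Ne.symm (hc3 j hj hjY2))
      exact Finset.mem_union.mpr (Or.inr (Finset.mem_sdiff.mpr ⟨(Finset.mem_sdiff.mp hj).1, hjY2⟩))
  obtain ⟨lam, hlsupp, hlsum, hlcomb, j0, hj0⟩ := exists_dep hnf
  have hj0D : j0 ∈ Y1 \ X1 := by
    by_contra hcon; exact hj0 (hlsupp j0 hcon)
  set S := (Y1 \ X1).filter (· ∉ Y2) with hS
  set T := (Y1 \ X1).filter (· ∈ Y2) with hT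
  have hSTD : S ∪ T = Y1 \ X1 := by
    ext j; simp only [hS, hT, Finset.mem_union, Finset.mem_filter]; tauto
  have hdisj : Disjoint S T := by
    rw [Finset.disjoint_left]
    intro j hjS hjT
    exact (Finset.mem_filter.mp hjS).2 (Finset.mem_filter.mp hjT).2
  have horient : ∃ lam' : Fin n → ℝ, (∀ j, j ∉ Y1 \ X1 → lam' j = 0) ∧ (∑ j, lam' j = 0) ∧
      (∑ j, lam' j • a j = 0) ∧ (∃ j ∈ S ∪ T, 0 < lam' j) := by
    rcases lt_or_gt_of_ne hj0 with hneg | hpos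
    · refine ⟨-lam, fun j hj => by simp [hlsupp j hj], by simp [hlsum], ?_,
        ⟨j0, hSTD ▸ hj0D, by simp; linarith⟩⟩
      simp only [Pi.neg_apply, neg_smul, Finset.sum_neg_distrib, hlcomb, neg_zero]
    · exact ⟨lam, hlsupp, hlsum, hlcomb, ⟨j0, hSTD ▸ hj0D, hpos⟩⟩
  obtain ⟨lam', hl'supp, hl'sum, hl'comb, hl'pos⟩ := horient
  have hwnegST : ∀ j ∈ S ∪ T, (fun j => -w j) j < 0 := by
    intro j hj; simp only [neg_neg]; simpa using hwpos j (hSTD ▸ hj)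
  have hl'suppST : ∀ j, j ∉ S ∪ T → lam' j = 0 := fun j hj => hl'supp j (by rwa [← hSTD])
  obtain ⟨t, hSfeas, hopt⟩ := core_push S T hdisj (fun j => -w j) lam' hwnegST hl'suppST
    hl'sum hl'pos
  set w' : Fin n → ℝ := fun j => w j - t * lam' j with hw'
  have hw'val : ∀ j, w' j = -(-w j + t * lam' j) := fun j => by rw [hw']; ring
  have hlamN : ∀ j ∈ Nset X1 Y1 X2 Y2, lam' j = 0 := by
    intro j hj
    refine hl'supp j ?_
    intro hjD
    obtain ⟨hjY1, hjX1⟩ := Finset.mem_sdiff.mp hjD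
    rcases Finset.mem_union.mp hj with hj' | hj'
    · exact hc1 j hjD (Finset.mem_sdiff.mp hj').1
    · exact (Finset.mem_sdiff.mp hj').2 hjY1
  have hPD : ∀ j ∈ Pset X1 Y1 X2 Y2, j ∈ Y1 \ X1 → j ∈ S := by
    intro j hj hjD
    rcases Finset.mem_union.mp hj with hj' | hj'
    · exact absurd (Finset.mem_sdiff.mp hj').1 (Finset.mem_sdiff.mp hjD).2
    · exact Finset.mem_filter.mpr ⟨hjD, (Finset.mem_sdiff.mp hj').2⟩
  have hDunion : ∀ j ∈ Y1 \ X1,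
      j ∈ Pset X1 Y1 X2 Y2 ∪ Nset X1 Y1 X2 Y2 ∪ Zset X1 Y1 X2 Y2 := by
    intro j hjD
    obtain ⟨hjY1, hjX1⟩ := Finset.mem_sdiff.mp hjD
    by_cases hjY2 : j ∈ Y2
    · refine Finset.mem_union.mpr (Or.inr ?_)
      exact Finset.mem_sdiff.mpr ⟨Finset.mem_inter.mpr ⟨hjY1, hjY2⟩,
        fun hc => (Finset.mem_union.mp hc).elim hjX1 (fun hcc => hc1 j hjD hcc)⟩
    · exact Finset.mem_union.mpr (Or.inl (Finset.mem_union.mpr (Or.inl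
        (Finset.mem_union.mpr (Or.inr (Finset.mem_sdiff.mpr ⟨hjY1, hjY2⟩))))))
  have hw'P : ∀ j ∈ Pset X1 Y1 X2 Y2, 0 ≤ w' j := by
    intro j hj
    by_cases hjD : j ∈ Y1 \ X1
    · have := hSfeas j (hPD j hj hjD)
      rw [hw'val j]; linarith
    · have : w' j = w j := by rw [hw']; simp [hl'supp j hjD]
      rw [this]; exact hP j hj
  have hw'N : ∀ j ∈ Nset X1 Y1 X2 Y2, w' j ≤ 0 := by
    intro j hj
    have : w' j = w j := by rw [hw']; simp [hlamN j hj]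
    rw [this]; exact hN j hj
  have hw'0 : ∀ j, j ∉ Pset X1 Y1 X2 Y2 ∪ Nset X1 Y1 X2 Y2 ∪ Zset X1 Y1 X2 Y2 → w' j = 0 := by
    intro j hj
    have hjD : j ∉ Y1 \ X1 := fun hc => hj (hDunion j hc)
    rw [hw']; simp [hl'supp j hjD, h0 j hj]
  have hsa' : (∑ j, w' j • a j) = 0 := by
    rw [hw']
    have : ∑ j, (w j - t * lam' j) • a j = ∑ j, w j • a j - t • ∑ j, lam' j • a j := by
      rw [Finset.smul_sum, ← Finset.sum_sub_distrib]
      exact Finset.sum_congr rfl fun j _ => by rw [sub_smul, mul_smul]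
    rw [this, hsa, hl'comb, smul_zero, sub_zero]
  have hs1' : (∑ j, w' j) = 0 := by
    rw [hw']
    rw [Finset.sum_sub_distrib, hs1, ← Finset.mul_sum, hl'sum, mul_zero, sub_zero]
  rcases hopt with ⟨i, hiT, hipos⟩ | ⟨i, hiS, hieq, j, hjS, hjne, hjnz⟩
  · obtain ⟨hiD, hiY2⟩ := Finset.mem_filter.mp hiT
    have hineg : w' i < 0 := by rw [hw'val i]; simpa using hipos
    exact ⟨i, hiD, w', witness_erase_mid hiD hiY2 (hc1 i hiD) hw'P hw'N hw'0
      (le_of_lt hineg) (Or.inr hineg) hsa' hs1'⟩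
  · obtain ⟨hiD, hiY2⟩ := Finset.mem_filter.mp hiS
    obtain ⟨hjD, hjY2⟩ := Finset.mem_filter.mp hjS
    have hieq' : w' i = 0 := by rw [hw'val i, hieq, neg_zero]
    have hjnz' : w' j ≠ 0 := by
      rw [hw'val j, neg_ne_zero]; exact hjnz
    refine ⟨i, hiD, w', witness_erase_outer h2 hiD hiY2 hw'P hw'N hw'0 hieq'
      ⟨j, ?_, hjnz'⟩ hsa' hs1'⟩
    exact Finset.mem_union.mpr (Or.inl (Finset.mem_union.mpr (Or.inr
      (Finset.mem_sdiff.mpr ⟨(Finset.mem_sdiff.mp hjD).1, hjY2⟩))))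

lemma witness_swap {a : Fin n → Fin d → ℝ} {X1 Y1 X2 Y2 : Finset (Fin n)} {w : Fin n → ℝ}
    (hw : IsWitness a X1 Y1 X2 Y2 w) : IsWitness a X2 Y2 X1 Y1 (-w) := by
  obtain ⟨hP, hN, h0, ⟨i0, hi0, hi0ne⟩, hsa, hs1⟩ := hw
  have EP : Pset X2 Y2 X1 Y1 = Nset X1 Y1 X2 Y2 := by
    ext j; simp only [Pset, Nset, Finset.mem_union, Finset.mem_sdiff]; try tauto
  have EN : Nset X2 Y2 X1 Y1 = Pset X1 Y1 X2 Y2 := by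
    ext j; simp only [Pset, Nset, Finset.mem_union, Finset.mem_sdiff]; try tauto
  have EZ : Zset X2 Y2 X1 Y1 = Zset X1 Y1 X2 Y2 := by
    ext j
    simp only [Zset, Finset.mem_sdiff, Finset.mem_inter, Finset.mem_union]
    tauto
  rw [IsWitness, EP, EN, EZ]
  refine ⟨fun j hj => by simpa using hN j hj, fun j hj => by simpa using hP j hj, ?_, ?_, ?_, ?_⟩
  · intro j hj
    rw [Finset.union_comm (Nset X1 Y1 X2 Y2) (Pset X1 Y1 X2 Y2)] at hj
    simp [h0 j hj]
  · refine ⟨i0, ?_, by simpa using hi0ne⟩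
    rw [Finset.union_comm (Nset X1 Y1 X2 Y2) (Pset X1 Y1 X2 Y2)]
    exact hi0
  · simp only [Pi.neg_apply, neg_smul, Finset.sum_neg_distrib, hsa, neg_zero]
  · simp only [Pi.neg_apply, Finset.sum_neg_distrib, hs1, neg_zero]

lemma refine_aux {a : Fin n → Fin d → ℝ} (hinj : Function.Injective a) (k : ℕ) :
    ∀ m : ℕ, ∀ X1 Y1 X2 Y2 : Finset (Fin n), ∀ w : Fin n → ℝ,
      (Y1 \ X1).card + (Y2 \ X2).card ≤ m →
      X1 ⊆ Y1 → X2 ⊆ Y2 →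
      X1.card < k → k < Y1.card → X2.card < k → k < Y2.card →
      IsWitness a X1 Y1 X2 Y2 w →
      ∃ X1' Y1' X2' Y2' : Finset (Fin n), ∃ w' : Fin n → ℝ,
        X1 ⊆ X1' ∧ X1' ⊆ Y1' ∧ Y1' ⊆ Y1 ∧ X2 ⊆ X2' ∧ X2' ⊆ Y2' ∧ Y2' ⊆ Y2 ∧
        FineTile a X1' Y1' ∧ FineTile a X2' Y2' ∧
        X1'.card < k ∧ k < Y1'.card ∧ X2'.card < k ∧ k < Y2'.card ∧
        IsWitness a X1' Y1' X2' Y2' w' := by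
  intro m
  induction m with
  | zero =>
    intro X1 Y1 X2 Y2 w hm h1 h2 hX1 hY1 hX2 hY2 hw
    exfalso
    have : (Y1 \ X1).card = Y1.card - X1.card := Finset.card_sdiff_of_subset h1
    omega
  | succ m ih =>
    intro X1 Y1 X2 Y2 w hm h1 h2 hX1 hY1 hX2 hY2 hw
    by_cases hf1 : FineTile a X1 Y1
    · by_cases hf2 : FineTile a X2 Y2
      · exact ⟨X1, Y1, X2, Y2, w, subset_refl _, h1, subset_refl _, subset_refl _, h2,
          subset_refl _, hf1, hf2, hX1, hY1, hX2, hY2, hw⟩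
      · have hw2 := witness_swap hw
        have hcard : 3 ≤ (Y2 \ X2).card := card_ge_three_of_not_fine hinj hf2
        have hcards : (Y2 \ X2).card = Y2.card - X2.card := Finset.card_sdiff_of_subset h2
        by_cases hadd : X2.card + 2 ≤ k
        · obtain ⟨i, hi, w2', hw2'⟩ := exists_add_move h1 hw2 hf2
          obtain ⟨hiY2, hiX2⟩ := Finset.mem_sdiff.mp hi
          have hsd : Y2 \ insert i X2 = (Y2 \ X2).erase i := by
            ext j
            simp only [Finset.mem_sdiff, Finset.mem_insert, Finset.mem_erase, ne_eq]
            tauto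
          have hmeas : (Y1 \ X1).card + (Y2 \ insert i X2).card ≤ m := by
            rw [hsd, Finset.card_erase_of_mem hi]
            omega
          obtain ⟨X1', Y1', X2', Y2', w'', ha1, ha2, ha3, ha4, ha5, ha6, ha7, ha8, ha9, ha10,
              ha11, ha12, ha13⟩ :=
            ih X1 Y1 (insert i X2) Y2 (-w2') hmeas h1
              (Finset.insert_subset hiY2 h2) hX1 hY1
              (by rw [Finset.card_insert_of_notMem hiX2]; omega) hY2 (witness_swap hw2')
          exact ⟨X1', Y1', X2', Y2', w'', ha1, ha2, ha3,
            (Finset.subset_insert i X2).trans ha4, ha5, ha6, ha7, ha8, ha9, ha10, ha11, ha12,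
            ha13⟩
        · obtain ⟨i, hi, w2', hw2'⟩ := exists_rem_move h1 hw2 hf2
          obtain ⟨hiY2, hiX2⟩ := Finset.mem_sdiff.mp hi
          have hsd : (Y2.erase i) \ X2 = (Y2 \ X2).erase i := by
            ext j
            simp only [Finset.mem_sdiff, Finset.mem_erase, ne_eq]
            tauto
          have hmeas : (Y1 \ X1).card + ((Y2.erase i) \ X2).card ≤ m := by
            rw [hsd, Finset.card_erase_of_mem hi]
            omega
          obtain ⟨X1', Y1', X2', Y2', w'', ha1, ha2, ha3, ha4, ha5, ha6, ha7, ha8, ha9, ha10,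
              ha11, ha12, ha13⟩ :=
            ih X1 Y1 X2 (Y2.erase i) (-w2') hmeas h1
              (Finset.subset_erase.mpr ⟨h2, hiX2⟩) hX1 hY1 hX2
              (by rw [Finset.card_erase_of_mem hiY2]; omega) (witness_swap hw2')
          exact ⟨X1', Y1', X2', Y2', w'', ha1, ha2, ha3, ha4, ha5,
            ha6.trans (Finset.erase_subset i Y2), ha7, ha8, ha9, ha10, ha11, ha12, ha13⟩
    · have hcard : 3 ≤ (Y1 \ X1).card := card_ge_three_of_not_fine hinj hf1
      have hcards : (Y1 \ X1).card = Y1.card - X1.card := Finset.card_sdiff_of_subset h1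
      by_cases hadd : X1.card + 2 ≤ k
      · obtain ⟨i, hi, w1', hw1'⟩ := exists_add_move h2 hw hf1
        obtain ⟨hiY1, hiX1⟩ := Finset.mem_sdiff.mp hi
        have hsd : Y1 \ insert i X1 = (Y1 \ X1).erase i := by
          ext j
          simp only [Finset.mem_sdiff, Finset.mem_insert, Finset.mem_erase, ne_eq]
          tauto
        have hmeas : (Y1 \ insert i X1).card + (Y2 \ X2).card ≤ m := by
          rw [hsd, Finset.card_erase_of_mem hi]
          omega
        obtain ⟨X1', Y1', X2', Y2', w'', ha1, ha2, ha3, ha4, ha5, ha6, ha7, ha8, ha9, ha10,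
            ha11, ha12, ha13⟩ :=
          ih (insert i X1) Y1 X2 Y2 w1' hmeas (Finset.insert_subset hiY1 h1) h2
            (by rw [Finset.card_insert_of_notMem hiX1]; omega) hY1 hX2 hY2 hw1'
        exact ⟨X1', Y1', X2', Y2', w'', (Finset.subset_insert i X1).trans ha1, ha2, ha3, ha4,
          ha5, ha6, ha7, ha8, ha9, ha10, ha11, ha12, ha13⟩
      · obtain ⟨i, hi, w1', hw1'⟩ := exists_rem_move h2 hw hf1
        obtain ⟨hiY1, hiX1⟩ := Finset.mem_sdiff.mp hi
        have hsd : (Y1.erase i) \ X1 = (Y1 \ X1).erase i := by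
          ext j
          simp only [Finset.mem_sdiff, Finset.mem_erase, ne_eq]
          tauto
        have hmeas : ((Y1.erase i) \ X1).card + (Y2 \ X2).card ≤ m := by
          rw [hsd, Finset.card_erase_of_mem hi]
          omega
        obtain ⟨X1', Y1', X2', Y2', w'', ha1, ha2, ha3, ha4, ha5, ha6, ha7, ha8, ha9, ha10,
            ha11, ha12, ha13⟩ :=
          ih X1 (Y1.erase i) X2 Y2 w1' hmeas (Finset.subset_erase.mpr ⟨h1, hiX1⟩) h2 hX1
            (by rw [Finset.card_erase_of_mem hiY1]; omega) hX2 hY2 hw1'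
        exact ⟨X1', Y1', X2', Y2', w'', ha1, ha2, ha3.trans (Finset.erase_subset i Y1), ha4,
          ha5, ha6, ha7, ha8, ha9, ha10, ha11, ha12, ha13⟩

theorem nonseparated_refines_to_fine_nonseparated {n d : ℕ} (a : Fin n → (Fin d → ℝ))
    (hinj : Function.Injective a)
    (k : ℕ) (hk1 : 1 ≤ k) (hk2 : k ≤ n - 1)
    (X1 Y1 X2 Y2 : Finset (Fin n)) (h1 : X1 ⊆ Y1) (h2 : X2 ⊆ Y2)
    (hcov1 : X1.card < k ∧ k < Y1.card) (hcov2 : X2.card < k ∧ k < Y2.card)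
    (hsep : ¬ SeparatedTiles a X1 Y1 X2 Y2) :
    ∃ X1' Y1' X2' Y2' : Finset (Fin n),
      X1 ⊆ X1' ∧ X1' ⊆ Y1' ∧ Y1' ⊆ Y1 ∧
      X2 ⊆ X2' ∧ X2' ⊆ Y2' ∧ Y2' ⊆ Y2 ∧
      FineTile a X1' Y1' ∧ FineTile a X2' Y2' ∧
      (X1'.card < k ∧ k < Y1'.card) ∧ (X2'.card < k ∧ k < Y2'.card) ∧
      ¬ SeparatedTiles a X1' Y1' X2' Y2' := by
  obtain ⟨w, hw⟩ := exists_witness_of_not_sep hinj h1 h2 hsep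
  obtain ⟨X1', Y1', X2', Y2', w', ha1, ha2, ha3, ha4, ha5, ha6, ha7, ha8, ha9, ha10, ha11,
      ha12, ha13⟩ :=
    refine_aux hinj k ((Y1 \ X1).card + (Y2 \ X2).card) X1 Y1 X2 Y2 w le_rfl h1 h2
      hcov1.1 hcov1.2 hcov2.1 hcov2.2 hw
  exact ⟨X1', Y1', X2', Y2', ha1, ha2, ha3, ha4, ha5, ha6, ha7, ha8, ⟨ha9, ha10⟩, ⟨ha11, ha12⟩,
    not_sep_of_witness ha13⟩
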